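/- arXiv:0809.1636 — 5 statements merged into one kernel-verified Lean document; each statement's English description precedes it below -/
import Mathlib

section
/- Let A > 0. There is a constant C depending only on A with the following property. Let k ≥ 16 be an integer, and let λ(p), λ(p²) be real numbers defined for each prime p satisfying the Hecke relation λ(p)² = λ(p²) + 1 and the Deligne bound |λ(p)| ≤ 2. Let L₁ > 0 be a real number such that exp( Σ_{p ≤ k} λ(p²)/p ) ≤ A (log log k)³ L₁. Then M := (1/((log k)² L₁)) · ∏_{p ≤ k} (1 + 2|λ(p)|/p) satisfies M ≤ C (log k)^{1/6} (log log k)^{9/2} L₁^{1/2}, where the product and sums run over primes p ≤ k. -/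
open Finset

namespace HSLemma3

/-- primes up to n -/
def P (n : ℕ) : Finset ℕ := (Finset.range (n + 1)).filter Nat.Prime

lemma prime_of_mem {n p : ℕ} (hp : p ∈ P n) : p.Prime := (mem_filter.1 hp).2

lemma chebyshev (n : ℕ) : ∑ p ∈ P n, Real.log p ≤ n * Real.log 4 := by
  have h1 : ∑ p ∈ P n, Real.log p = Real.log (primorial n) := by
    rw [primorial, Nat.cast_prod, Real.log_prod]
    · rfl
    · intro p hp
      exact_mod_cast (prime_of_mem hp).pos.ne'
  rw [h1]
  calc Real.log (primorial n) ≤ Real.log ((4 ^ n : ℕ) : ℝ) := by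
        apply Real.log_le_log (by exact_mod_cast primorial_pos n)
        exact_mod_cast primorial_le_4_pow n
    _ = n * Real.log 4 := by
        push_cast
        exact Real.log_pow 4 n

lemma pow_div_dvd_factorial {p n : ℕ} (hp : p.Prime) (hn : 1 ≤ n) :
    p ^ (n / p) ∣ (Nat.factorial n) := by
  rw [Nat.Prime.pow_dvd_factorial_iff hp
    (lt_of_le_of_lt (Nat.log_le_self p n) (Nat.lt_succ_self n))]
  calc n / p = n / p ^ 1 := by rw [pow_one]
    _ ≤ ∑ i ∈ Finset.Ico 1 (n + 1), n / p ^ i := by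
        apply Finset.single_le_sum (f := fun i => n / p ^ i)
        · intro i _; exact Nat.zero_le _
        · simp [Nat.lt_of_lt_of_le Nat.zero_lt_one hn]

lemma prod_pp_dvd {m : ℕ} (s : Finset ℕ) (hs : ∀ p ∈ s, p.Prime) (e : ℕ → ℕ)
    (h : ∀ p ∈ s, p ^ e p ∣ m) : (∏ p ∈ s, p ^ e p) ∣ m := by
  classical
  induction s using Finset.induction_on with
  | empty => simpa using one_dvd m
  | @insert a s ha ih =>
    rw [Finset.prod_insert ha]
    have hcop : Nat.Coprime (a ^ e a) (∏ p ∈ s, p ^ e p) := by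
      apply Nat.Coprime.pow_left
      apply Nat.Coprime.prod_right
      intro p hp
      exact Nat.Coprime.pow_right _
        ((Nat.coprime_primes (hs a (mem_insert_self a s)) (hs p (mem_insert_of_mem hp))).2
          (fun hap => ha (hap ▸ hp)))
    exact hcop.mul_dvd_of_dvd_of_dvd (h a (mem_insert_self a s))
      (ih (fun p hp => hs p (mem_insert_of_mem hp)) (fun p hp => h p (mem_insert_of_mem hp)))

lemma mertens1 {n : ℕ} (hn : 2 ≤ n) :
    ∑ p ∈ P n, Real.log p / p ≤ Real.log n + Real.log 4 := by
  have hn0 : (0:ℝ) < n := by positivity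
  rw [← mul_le_mul_iff_right₀ hn0]
  have hdvd : (∏ p ∈ P n, p ^ (n / p)) ∣ (Nat.factorial n) :=
    prod_pp_dvd _ (fun p hp => prime_of_mem hp) _
      (fun p hp => pow_div_dvd_factorial (prime_of_mem hp) (by omega))
  have hlogprod : ∑ p ∈ P n, ((n / p : ℕ) : ℝ) * Real.log p
      = Real.log ((∏ p ∈ P n, p ^ (n / p) : ℕ) : ℝ) := by
    rw [Nat.cast_prod, Real.log_prod]
    · apply Finset.sum_congr rfl
      intro p _
      rw [← Real.log_pow]
      norm_num
    · intro p hp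
      have := (prime_of_mem hp).pos
      positivity
  calc (n:ℝ) * ∑ p ∈ P n, Real.log p / p
      = ∑ p ∈ P n, (n:ℝ)/p * Real.log p := by
        rw [Finset.mul_sum]; apply Finset.sum_congr rfl; intro p _; ring
    _ ≤ ∑ p ∈ P n, (((n / p : ℕ) : ℝ) + 1) * Real.log p := by
        apply Finset.sum_le_sum
        intro p hp
        have hp2 := prime_of_mem hp
        have hpp : (0:ℝ) < p := by exact_mod_cast hp2.pos
        apply mul_le_mul_of_nonneg_right _ (Real.log_nonneg (by exact_mod_cast hp2.one_le))
        rw [div_le_iff₀ hpp]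
        have h1 : n < p * (n / p + 1) := Nat.lt_mul_div_succ n hp2.pos
        have h2 : (n:ℝ) < p * ((n/p : ℕ) + 1) := by exact_mod_cast h1
        nlinarith
    _ = ∑ p ∈ P n, ((n / p : ℕ) : ℝ) * Real.log p + ∑ p ∈ P n, Real.log p := by
        rw [← Finset.sum_add_distrib]
        apply Finset.sum_congr rfl; intro p _; ring
    _ ≤ Real.log ((Nat.factorial n) : ℕ) + n * Real.log 4 := by
        apply add_le_add _ (chebyshev n)
        rw [hlogprod]
        apply Real.log_le_log
        · exact_mod_cast Finset.prod_pos (fun p hp => pow_pos (prime_of_mem hp).pos _)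
        · exact_mod_cast Nat.le_of_dvd (Nat.factorial_pos n) hdvd
    _ ≤ (n:ℝ) * (Real.log n + Real.log 4) := by
        rw [mul_add]
        apply add_le_add_left
        calc Real.log ((Nat.factorial n) : ℕ) ≤ Real.log ((n ^ n : ℕ) : ℝ) := by
              apply Real.log_le_log (by exact_mod_cast (Nat.factorial_pos n))
              exact_mod_cast Nat.factorial_le_pow n
          _ = n * Real.log n := by push_cast; exact Real.log_pow (n:ℝ) n

end HSLemma3

namespace HSLemma3

lemma mertens2 {n : ℕ} (hn : 2 ≤ n) :
    ∑ p ∈ P n, 1 / (p:ℝ)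
      ≤ Real.log (Real.log n)
        + (1 - Real.log (Real.log 2) + Real.log 4 / Real.log 2) := by
  set f : ℕ → ℝ := fun i => 1 / Real.log i with hf
  set g : ℕ → ℝ := fun i => if i.Prime then Real.log i / i else 0 with hg
  have habel := Finset.sum_range_by_parts f g (n + 1)
  simp only [smul_eq_mul, Nat.add_sub_cancel] at habel
  have hG : ∀ m : ℕ, ∑ i ∈ range (m + 1), g i = ∑ p ∈ P m, Real.log p / p := by
    intro m
    rw [P, Finset.sum_filter]
  have hGnonneg : ∀ m : ℕ, 0 ≤ ∑ i ∈ range m, g i := by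
    intro m
    apply Finset.sum_nonneg
    intro i _
    by_cases h : i.Prime
    · simp only [hg, if_pos h]
      have h1 : (1:ℝ) ≤ i := by exact_mod_cast h.one_le
      have := Real.log_nonneg h1
      positivity
    · simp [hg, h]
  have hGle : ∀ m : ℕ, 2 ≤ m →
      ∑ i ∈ range (m+1), g i ≤ Real.log m + Real.log 4 := by
    intro m hm; rw [hG]; exact mertens1 hm
  have hlhs : ∑ p ∈ P n, 1/(p:ℝ) = ∑ i ∈ range (n+1), f i * g i := by
    rw [P, Finset.sum_filter]
    apply Finset.sum_congr rfl
    intro i _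
    by_cases h : i.Prime
    · have hl : Real.log i ≠ 0 := ne_of_gt (Real.log_pos (by exact_mod_cast h.one_lt))
      simp only [hf, hg, if_pos h]
      field_simp
    · simp [hf, hg, h]
  set ψ : ℕ → ℝ := fun i =>
    Real.log (Real.log ((max i 2 : ℕ) : ℝ))
      - Real.log 4 * (1 / Real.log ((max i 2 : ℕ) : ℝ)) with hψ
  have htel : ∑ i ∈ range n, (ψ (i+1) - ψ i) = ψ n - ψ 0 := Finset.sum_range_sub ψ n
  have hterm : ∀ i ∈ range n,
      (f i - f (i+1)) * (∑ j ∈ range (i+1), g j) ≤ ψ (i+1) - ψ i := by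
    intro i _
    by_cases hi : 2 ≤ i
    · have hmax1 : max i 2 = i := max_eq_left hi
      have hmax2 : max (i+1) 2 = i + 1 := max_eq_left (by omega)
      have hi1 : (1:ℝ) < i := by exact_mod_cast hi
      have hli : 0 < Real.log i := Real.log_pos hi1
      have hli1 : 0 < Real.log ((i:ℝ)+1) := Real.log_pos (by linarith)
      have hlle : Real.log i ≤ Real.log ((i:ℝ)+1) :=
        Real.log_le_log (by linarith) (by linarith)
      have hdiffnn : 0 ≤ f i - f (i+1) := by
        simp only [hf]
        push_cast
        have : 1 / Real.log ((i:ℝ)+1) ≤ 1 / Real.log i :=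
          one_div_le_one_div_of_le hli hlle
        linarith
      have hGb : ∑ j ∈ range (i+1), g j ≤ Real.log i + Real.log 4 := hGle i hi
      have step1 : (f i - f (i+1)) * (∑ j ∈ range (i+1), g j)
          ≤ (f i - f (i+1)) * (Real.log i + Real.log 4) :=
        mul_le_mul_of_nonneg_left hGb hdiffnn
      have key : 1 - Real.log i / Real.log ((i:ℝ)+1)
          ≤ Real.log (Real.log ((i:ℝ)+1)) - Real.log (Real.log i) := by
        have h0 : 0 < Real.log i / Real.log ((i:ℝ)+1) := by positivity
        have := Real.log_le_sub_one_of_pos h0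
        rw [Real.log_div (ne_of_gt hli) (ne_of_gt hli1)] at this
        linarith
      have expand : (f i - f (i+1)) * (Real.log i + Real.log 4)
          = (1 - Real.log i / Real.log ((i:ℝ)+1))
            + Real.log 4 * (1 / Real.log i - 1 / Real.log ((i:ℝ)+1)) := by
        simp only [hf]
        push_cast
        field_simp
      have hψd : ψ (i+1) - ψ i
          = (Real.log (Real.log ((i:ℝ)+1)) - Real.log (Real.log i))
            + Real.log 4 * (1 / Real.log i - 1 / Real.log ((i:ℝ)+1)) := by
        simp only [hψ]
        rw [hmax1, hmax2]
        push_cast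
        ring
      rw [hψd]
      calc (f i - f (i+1)) * (∑ j ∈ range (i+1), g j)
          ≤ (f i - f (i+1)) * (Real.log i + Real.log 4) := step1
        _ = (1 - Real.log i / Real.log ((i:ℝ)+1))
            + Real.log 4 * (1 / Real.log i - 1 / Real.log ((i:ℝ)+1)) := expand
        _ ≤ (Real.log (Real.log ((i:ℝ)+1)) - Real.log (Real.log i))
            + Real.log 4 * (1 / Real.log i - 1 / Real.log ((i:ℝ)+1)) := by linarith
    · interval_cases i
      · have : f 0 = f 1 := by
          simp [hf, Real.log_zero, Real.log_one]
        simp [this, hψ]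
      · have hG2 : ∑ j ∈ range 2, g j = 0 := by
          simp [Finset.sum_range_succ, hg, Nat.not_prime_zero, Nat.not_prime_one]
        rw [hG2]
        simp [hψ]
  have hsum : ∑ i ∈ range n, (f i - f (i+1)) * (∑ j ∈ range (i+1), g j)
      ≤ ψ n - ψ 0 := htel ▸ Finset.sum_le_sum hterm
  have hneg : ∑ i ∈ range n, (f (i+1) - f i) * (∑ j ∈ range (i+1), g j)
      = - ∑ i ∈ range n, (f i - f (i+1)) * (∑ j ∈ range (i+1), g j) := by
    rw [← Finset.sum_neg_distrib]
    exact Finset.sum_congr rfl (fun i _ => by ring)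
  have hn1 : (1:ℝ) < n := by exact_mod_cast (by omega : 1 < n)
  have hln : 0 < Real.log n := Real.log_pos hn1
  have hfT : f n * (∑ i ∈ range (n+1), g i)
      ≤ 1 + Real.log 4 * (1 / Real.log n) := by
    have h1 : f n * (∑ i ∈ range (n+1), g i) ≤ f n * (Real.log n + Real.log 4) := by
      apply mul_le_mul_of_nonneg_left (hGle n hn)
      simp only [hf]
      positivity
    have h2 : f n * (Real.log n + Real.log 4) = 1 + Real.log 4 * (1 / Real.log n) := by
      simp only [hf]
      field_simp
    linarith
  have hψn : ψ n - ψ 0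
      = Real.log (Real.log n) - Real.log 4 * (1 / Real.log n)
        - Real.log (Real.log 2) + Real.log 4 * (1 / Real.log 2) := by
    simp only [hψ]
    rw [max_eq_left hn]
    norm_num
    ring
  rw [hlhs, habel, hneg, sub_neg_eq_add]
  calc f n * (∑ i ∈ range (n+1), g i)
        + ∑ i ∈ range n, (f i - f (i+1)) * (∑ j ∈ range (i+1), g j)
      ≤ (1 + Real.log 4 * (1 / Real.log n)) + (ψ n - ψ 0) := add_le_add hfT hsum
    _ = Real.log (Real.log n)
        + (1 - Real.log (Real.log 2) + Real.log 4 / Real.log 2) := by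
        rw [hψn]; ring

end HSLemma3


open HSLemma3 Finset

/-- Lemma 3 of Holowinsky–Soundararajan (abstract form): if
`exp(Σ_{p ≤ k} λ(p²)/p) ≤ A (log log k)³ L₁`, then
`M = (1/((log k)² L₁)) ∏_{p ≤ k} (1 + 2|λ(p)|/p)` satisfies
`M ≤ C (log k)^{1/6} (log log k)^{9/2} L₁^{1/2}` with `C` depending only on `A`. -/
theorem lemma_three (A : ℝ) (hA : 0 < A) :
    ∃ C : ℝ, ∀ (k : ℕ) (lam lam2 : ℕ → ℝ) (L₁ : ℝ),
      16 ≤ k →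
      (∀ p : ℕ, p.Prime → (lam p) ^ 2 = lam2 p + 1) →
      (∀ p : ℕ, p.Prime → |lam p| ≤ 2) →
      0 < L₁ →
      Real.exp (∑ p ∈ (Finset.range (k + 1)).filter Nat.Prime, lam2 p / p)
        ≤ A * (Real.log (Real.log k)) ^ 3 * L₁ →
      (1 / ((Real.log k) ^ 2 * L₁)) *
          ∏ p ∈ (Finset.range (k + 1)).filter Nat.Prime, (1 + 2 * |lam p| / p)
        ≤ C * (Real.log k) ^ ((1 : ℝ) / 6) *
            (Real.log (Real.log k)) ^ ((9 : ℝ) / 2) * L₁ ^ ((1 : ℝ) / 2) := by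
  set c : ℝ := 1 - Real.log (Real.log 2) + Real.log 4 / Real.log 2 with hcdef
  refine ⟨A ^ ((3:ℝ)/2) * Real.exp (13 / 6 * c), ?_⟩
  intro k lam lam2 L₁ hk hH _hD hL hexp
  have hPk : (Finset.range (k + 1)).filter Nat.Prime = P k := rfl
  rw [hPk] at hexp ⊢
  have hk16 : (16:ℝ) ≤ (k:ℝ) := by exact_mod_cast hk
  have hlk : 1 < Real.log k := by
    rw [Real.lt_log_iff_exp_lt (by linarith)]
    have := Real.exp_one_lt_d9
    linarith
  have hlk0 : 0 < Real.log k := by linarith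
  have hX : 0 < Real.log (Real.log k) := Real.log_pos hlk
  set X := Real.log (Real.log k) with hXdef
  have hR : 0 < A * X ^ 3 * L₁ := by positivity
  -- Step 1: product ≤ exp of sum
  have hprod : ∏ p ∈ P k, (1 + 2 * |lam p| / p)
      ≤ Real.exp (∑ p ∈ P k, 2 * |lam p| / p) := by
    rw [Real.exp_sum]
    apply Finset.prod_le_prod
    · intro p _; positivity
    · intro p _
      have := Real.add_one_le_exp (2 * |lam p| / p)
      linarith
  -- Step 2: termwise AM-GM
  have hsum : ∑ p ∈ P k, 2 * |lam p| / p
      ≤ (3/2) * ∑ p ∈ P k, lam2 p / p + (13/6) * ∑ p ∈ P k, 1 / (p:ℝ) := by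
    rw [Finset.mul_sum, Finset.mul_sum, ← Finset.sum_add_distrib]
    apply Finset.sum_le_sum
    intro p hp
    have hpp := prime_of_mem hp
    have hp0 : (0:ℝ) < p := by exact_mod_cast hpp.pos
    have h1 : 2 * |lam p| ≤ (3/2) * lam2 p + 13/6 := by
      have h2 := hH p hpp
      nlinarith [sq_nonneg (|lam p| - 2/3), sq_abs (lam p)]
    calc 2 * |lam p| / p ≤ ((3/2) * lam2 p + 13/6) / p := by gcongr
      _ = 3/2 * (lam2 p / p) + 13/6 * (1 / (p:ℝ)) := by ring
  -- Step 3: bound on the lam2 sum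
  have hS : ∑ p ∈ P k, lam2 p / p ≤ Real.log (A * X ^ 3 * L₁) := by
    have h := Real.log_le_log (Real.exp_pos _) hexp
    rwa [Real.log_exp] at h
  -- Step 4: Mertens
  have hQ : ∑ p ∈ P k, 1 / (p:ℝ) ≤ X + c := by
    have := mertens2 (n := k) (by omega)
    rw [hcdef]
    linarith
  -- Step 5: combine exponentials
  have hE : Real.exp (∑ p ∈ P k, 2 * |lam p| / p)
      ≤ (A * X ^ 3 * L₁) ^ ((3:ℝ)/2)
        * (Real.log k ^ ((13:ℝ)/6) * Real.exp (13 / 6 * c)) := by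
    have h1 : ∑ p ∈ P k, 2 * |lam p| / p
        ≤ Real.log (A * X ^ 3 * L₁) * (3/2) + (X * (13/6) + 13 / 6 * c) := by
      nlinarith [hS, hQ, hsum]
    calc Real.exp (∑ p ∈ P k, 2 * |lam p| / p)
        ≤ Real.exp (Real.log (A * X ^ 3 * L₁) * (3/2) + (X * (13/6) + 13 / 6 * c)) :=
          Real.exp_le_exp.2 h1
      _ = (A * X ^ 3 * L₁) ^ ((3:ℝ)/2)
          * (Real.log k ^ ((13:ℝ)/6) * Real.exp (13 / 6 * c)) := by
          rw [Real.exp_add, Real.exp_add, ← Real.rpow_def_of_pos hR, hXdef,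
            ← Real.rpow_def_of_pos hlk0]
  -- Step 6: final algebra
  have hfinal : (A * X ^ 3 * L₁) ^ ((3:ℝ)/2)
      = A ^ ((3:ℝ)/2) * X ^ ((9:ℝ)/2) * L₁ ^ ((3:ℝ)/2) := by
    rw [Real.mul_rpow (by positivity) hL.le, Real.mul_rpow hA.le (by positivity)]
    congr 1
    rw [← Real.rpow_natCast X 3, ← Real.rpow_mul hX.le]
    norm_num
  have hlk13 : Real.log k ^ ((13:ℝ)/6)
      = (Real.log k) ^ 2 * Real.log k ^ ((1:ℝ)/6) := by
    rw [← Real.rpow_natCast (Real.log k) 2, ← Real.rpow_add hlk0]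
    norm_num
  have hL32 : L₁ ^ ((3:ℝ)/2) = L₁ * L₁ ^ ((1:ℝ)/2) := by
    nth_rewrite 2 [← Real.rpow_one L₁]
    rw [← Real.rpow_add hL]
    norm_num
  have hcoef : 0 < 1 / ((Real.log k) ^ 2 * L₁) := by positivity
  calc (1 / ((Real.log k) ^ 2 * L₁)) * ∏ p ∈ P k, (1 + 2 * |lam p| / p)
      ≤ (1 / ((Real.log k) ^ 2 * L₁)) *
          ((A * X ^ 3 * L₁) ^ ((3:ℝ)/2)
            * (Real.log k ^ ((13:ℝ)/6) * Real.exp (13 / 6 * c))) := by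
        apply mul_le_mul_of_nonneg_left (le_trans hprod hE) hcoef.le
    _ = A ^ ((3:ℝ)/2) * Real.exp (13 / 6 * c) * Real.log k ^ ((1:ℝ)/6)
        * X ^ ((9:ℝ)/2) * L₁ ^ ((1:ℝ)/2) := by
        rw [hfinal, hlk13, hL32]
        have hne1 : (Real.log k) ^ 2 ≠ 0 := by positivity
        have hne2 : L₁ ≠ 0 := ne_of_gt hL
        field_simp
end

section
/- Let A > 0 and 0 < ε < 1. There are constants C and k₀ depending only on A and ε with the following property. Let k ≥ k₀ be an integer, and let λ(p), λ(p²) be real numbers defined for each prime p satisfying the Hecke relation λ(p)² = λ(p²) + 1 and the Deligne bound |λ(p)| ≤ 2. Let L₁ > 0 satisfy exp( Σ_{p ≤ k} λ(p²)/p ) ≤ A (log log k)³ L₁. Then M := (1/((log k)² L₁)) · ∏_{p ≤ k} (1 + 2|λ(p)|/p) satisfies M ≤ C (log k)^{ε} exp( − Σ_{p ≤ k} (|λ(p)| − 1)²/p ), where sums and products run over primes p ≤ k. -/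
open Finset Real Filter

section HolowinskyAux

theorem chebyshev_theta (n : ℕ) :
    ∑ p ∈ (Finset.range (n+1)).filter Nat.Prime, Real.log p ≤ n * Real.log 4 := by
  have h2 : ∑ p ∈ (Finset.range (n+1)).filter Nat.Prime, Real.log p
      = Real.log (primorial n) := by
    rw [primorial, Nat.cast_prod,
      Real.log_prod (fun p hp => by
        have := (Finset.mem_filter.mp hp).2.pos
        positivity)]
  rw [h2]
  calc Real.log (primorial n) ≤ Real.log ((4^n : ℕ) : ℝ) := by
        apply Real.log_le_log (by exact_mod_cast primorial_pos n)
        exact_mod_cast primorial_le_4_pow n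
    _ = (n:ℝ) * Real.log 4 := by
        push_cast
        rw [Real.log_pow]

theorem mertens1 (n : ℕ) (hn : 2 ≤ n) :
    ∑ p ∈ (Finset.range (n+1)).filter Nat.Prime, Real.log p / p
      ≤ Real.log n + Real.log 4 := by
  have cheb := chebyshev_theta n
  set S := (Finset.range (n+1)).filter Nat.Prime with hS
  have hnR : (0:ℝ) < n := by positivity
  -- each p in S is prime and ≤ n
  have hmem : ∀ p ∈ S, p.Prime ∧ p ≤ n := by
    intro p hp
    rw [hS, Finset.mem_filter, Finset.mem_range] at hp
    exact ⟨hp.2, by omega⟩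
  -- log n! = sum over support
  have hfact_eq : Real.log (Nat.factorial n) =
      ∑ p ∈ (Nat.factorial n).factorization.support, ((Nat.factorial n).factorization p : ℝ) * Real.log p := by
    conv_lhs => rw [← Nat.factorization_prod_pow_eq_self (Nat.factorial_ne_zero n)]
    rw [Finsupp.prod, Nat.cast_prod, Real.log_prod]
    · apply Finset.sum_congr rfl
      intro p hp
      rw [Nat.cast_pow, Real.log_pow]
    · intro p hp
      have hp' : p.Prime := Nat.prime_of_mem_primeFactors (by rwa [Nat.support_factorization] at hp)
      have := hp'.pos
      positivity
  have hsub : S ⊆ (Nat.factorial n).factorization.support := by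
    intro p hp
    obtain ⟨hp', hpn⟩ := hmem p hp
    rw [Nat.support_factorization, Nat.mem_primeFactors]
    exact ⟨hp', Nat.dvd_factorial hp'.pos hpn, Nat.factorial_ne_zero n⟩
  have hdiv : ∀ p ∈ S, ((n / p : ℕ) : ℝ) ≤ ((Nat.factorial n).factorization p : ℝ) := by
    intro p hp
    obtain ⟨hp', hpn⟩ := hmem p hp
    have hlogpos : 0 < Nat.log p n := Nat.log_pos hp'.one_lt hpn
    have hdvd : p ^ (n / p) ∣ Nat.factorial n := by
      rw [hp'.pow_dvd_factorial_iff (Nat.lt_succ_self _)]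
      calc n / p = n / p ^ 1 := by rw [pow_one]
        _ ≤ ∑ i ∈ Finset.Ico 1 (Nat.log p n + 1), n / p ^ i := by
            apply Finset.single_le_sum (f := fun i => n / p ^ i)
            · intro i _; positivity
            · rw [Finset.mem_Ico]; omega
    exact_mod_cast (Nat.Prime.pow_dvd_iff_le_factorization hp' (Nat.factorial_ne_zero n)).mp hdvd
  -- key: Σ (n/p) log p ≤ n log n
  have key : ∑ p ∈ S, ((n / p : ℕ) : ℝ) * Real.log p ≤ n * Real.log n := by
    calc ∑ p ∈ S, ((n / p : ℕ) : ℝ) * Real.log p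
        ≤ ∑ p ∈ S, ((Nat.factorial n).factorization p : ℝ) * Real.log p := by
          apply Finset.sum_le_sum
          intro p hp
          have hlog : (0:ℝ) ≤ Real.log p := Real.log_natCast_nonneg p
          exact mul_le_mul_of_nonneg_right (hdiv p hp) hlog
      _ ≤ ∑ p ∈ (Nat.factorial n).factorization.support, ((Nat.factorial n).factorization p : ℝ) * Real.log p := by
          apply Finset.sum_le_sum_of_subset_of_nonneg hsub
          intro p _ _
          have hlog : (0:ℝ) ≤ Real.log p := Real.log_natCast_nonneg p
          positivity
      _ = Real.log (Nat.factorial n) := hfact_eq.symm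
      _ ≤ Real.log ((n:ℕ)^n : ℕ) := by
          apply Real.log_le_log (by exact_mod_cast Nat.factorial_pos n)
          exact_mod_cast Nat.factorial_le_pow n
      _ = n * Real.log n := by push_cast; rw [Real.log_pow]
  -- now divide by n
  have final : ∑ p ∈ S, Real.log p / p ≤ Real.log n + Real.log 4 := by
    have hstep : ∀ p ∈ S, Real.log p / p ≤ (((n / p : ℕ) : ℝ) * Real.log p + Real.log p) / n := by
      intro p hp
      obtain ⟨hp', hpn⟩ := hmem p hp
      have hpR : (0:ℝ) < p := by exact_mod_cast hp'.pos
      have hlog : (0:ℝ) ≤ Real.log p := Real.log_natCast_nonneg p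
      have hfl : (n:ℝ)/p - 1 ≤ ((n / p : ℕ) : ℝ) := by
        have h1 := Nat.div_add_mod n p
        have h2 : n % p < p := Nat.mod_lt n hp'.pos
        have h1' : (p:ℝ) * ((n/p : ℕ):ℝ) + ((n % p : ℕ):ℝ) = (n:ℝ) := by exact_mod_cast h1
        have h2' : ((n % p : ℕ):ℝ) < (p:ℝ) := by exact_mod_cast h2
        rw [div_sub_one (ne_of_gt hpR), div_le_iff₀ hpR]
        nlinarith
      have hn2 : (n:ℝ) ≤ (((n / p : ℕ) : ℝ) + 1) * p := by
        rw [← div_le_iff₀ hpR]; linarith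
      rw [div_le_div_iff₀ hpR hnR]
      nlinarith [mul_le_mul_of_nonneg_right hn2 hlog]
    calc ∑ p ∈ S, Real.log p / p
        ≤ ∑ p ∈ S, (((n / p : ℕ) : ℝ) * Real.log p + Real.log p) / n :=
          Finset.sum_le_sum hstep
      _ = (∑ p ∈ S, ((n / p : ℕ) : ℝ) * Real.log p + ∑ p ∈ S, Real.log p) / n := by
          rw [← Finset.sum_div, Finset.sum_add_distrib]
      _ ≤ ((n:ℝ) * Real.log n + (n:ℝ) * Real.log 4) / n := by
          gcongr
      _ = Real.log n + Real.log 4 := by field_simp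
  exact final



theorem sum_filter_succ (f : ℕ → ℝ) (k : ℕ) :
    ∑ p ∈ (Finset.range (k+2)).filter Nat.Prime, f p
      = ∑ p ∈ (Finset.range (k+1)).filter Nat.Prime, f p
        + if Nat.Prime (k+1) then f (k+1) else 0 := by
  rw [Finset.sum_filter, Finset.sum_filter, Finset.sum_range_succ]

theorem tele (F : ℕ → ℝ) (k : ℕ) (hk : 2 ≤ k) :
    ∑ i ∈ Finset.Ico 2 k, (F (i+1) - F i) = F k - F 2 := by
  induction k, hk using Nat.le_induction with
  | base => simp
  | succ k hk ih => rw [Finset.sum_Ico_succ_top hk, ih]; ring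

theorem abel_id (k : ℕ) (hk : 2 ≤ k) :
    ∑ p ∈ (Finset.range (k+1)).filter Nat.Prime, (1:ℝ) / p
      = (∑ p ∈ (Finset.range (k+1)).filter Nat.Prime, Real.log p / p) / Real.log k
        + ∑ i ∈ Finset.Ico 2 k,
            (∑ p ∈ (Finset.range (i+1)).filter Nat.Prime, Real.log p / p)
              * (1 / Real.log i - 1 / Real.log (i+1)) := by
  induction k, hk using Nat.le_induction with
  | base =>
      have h2 : (Finset.range 3).filter Nat.Prime = {2} := by decide
      simp only [h2, Finset.sum_singleton, Finset.Ico_self, Finset.sum_empty, add_zero]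
      have : Real.log 2 ≠ 0 := by
        have := Real.log_pos (by norm_num : (1:ℝ) < 2)
        linarith
      push_cast
      field_simp
  | succ k hk ih =>
      have hlogk : Real.log k ≠ 0 := by
        have : (1:ℝ) < k := by exact_mod_cast hk
        have := Real.log_pos this
        linarith
      have hlogk1 : Real.log (k+1) ≠ 0 := by
        have : (1:ℝ) < (k:ℝ)+1 := by
          have : (1:ℝ) ≤ (k:ℝ) := by exact_mod_cast le_trans one_le_two hk
          linarith
        have := Real.log_pos this
        linarith
      have hS := sum_filter_succ (fun p => (1:ℝ) / p) k
      have hT := sum_filter_succ (fun p => Real.log p / p) k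
      rw [show k + 1 + 1 = k + 2 from rfl, hS, hT, Finset.sum_Ico_succ_top hk, ih]
      push_cast
      by_cases hp : Nat.Prime (k+1)
      · simp only [hp, if_true]
        push_cast
        field_simp
        ring
      · simp only [hp, if_false]
        field_simp
        ring

noncomputable def MB : ℝ := 1 + Real.log 4 / Real.log 2 - Real.log (Real.log 2)

theorem mertens2 (k : ℕ) (hk : 2 ≤ k) :
    ∑ p ∈ (Finset.range (k+1)).filter Nat.Prime, (1:ℝ) / p
      ≤ Real.log (Real.log k) + MB := by
  have hlogk : (0:ℝ) < Real.log k :=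
    Real.log_pos (by exact_mod_cast hk)
  have hlog2 : (0:ℝ) < Real.log 2 := Real.log_pos (by norm_num)
  rw [abel_id k hk]
  set F : ℕ → ℝ := fun i => Real.log (Real.log i) - Real.log 4 / Real.log i with hF
  have hterm : ∀ i ∈ Finset.Ico 2 k,
      (∑ p ∈ (Finset.range (i+1)).filter Nat.Prime, Real.log p / p)
        * (1 / Real.log i - 1 / Real.log (i+1)) ≤ F (i+1) - F i := by
    intro i hi
    rw [Finset.mem_Ico] at hi
    obtain ⟨hi2, _⟩ := hi
    have hli : (0:ℝ) < Real.log i := Real.log_pos (by exact_mod_cast hi2)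
    have hli1 : (0:ℝ) < Real.log (i+1) := by
      apply Real.log_pos
      have : (1:ℝ) ≤ (i:ℝ) := by exact_mod_cast le_trans one_le_two hi2
      linarith
    have hmono : Real.log i ≤ Real.log (i+1) := by
      apply Real.log_le_log (by positivity)
      push_cast; linarith
    have hdiffnn : (0:ℝ) ≤ 1 / Real.log i - 1 / Real.log (i+1) := by
      rw [sub_nonneg]
      apply div_le_div_of_nonneg_left one_pos.le hli hmono
    have hT := mertens1 i hi2
    have h1 : (∑ p ∈ (Finset.range (i+1)).filter Nat.Prime, Real.log p / p)
        * (1 / Real.log i - 1 / Real.log (i+1))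
        ≤ (Real.log i + Real.log 4) * (1 / Real.log i - 1 / Real.log (i+1)) :=
      mul_le_mul_of_nonneg_right hT hdiffnn
    have hconcave : (Real.log (i+1) - Real.log i) / Real.log (i+1)
        ≤ Real.log (Real.log (i+1)) - Real.log (Real.log i) := by
      have := Real.log_le_sub_one_of_pos (show (0:ℝ) < Real.log i / Real.log (i+1) by positivity)
      rw [Real.log_div (ne_of_gt hli) (ne_of_gt hli1)] at this
      have h2 : Real.log i / Real.log (i+1) - 1
          = -((Real.log (i+1) - Real.log i) / Real.log (i+1)) := by
        field_simp
        ring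
      rw [h2] at this
      linarith
    have halg : (Real.log i + Real.log 4) * (1 / Real.log i - 1 / Real.log (i+1))
        = (Real.log (i+1) - Real.log i) / Real.log (i+1)
          + (Real.log 4 / Real.log i - Real.log 4 / Real.log (i+1)) := by
      field_simp
    rw [hF]
    simp only []
    push_cast
    rw [halg] at h1
    calc _ ≤ _ := h1
      _ ≤ _ := by push_cast at hconcave ⊢; linarith
  have hsum : ∑ i ∈ Finset.Ico 2 k,
      (∑ p ∈ (Finset.range (i+1)).filter Nat.Prime, Real.log p / p)
        * (1 / Real.log i - 1 / Real.log (i+1))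
      ≤ F k - F 2 := by
    calc _ ≤ ∑ i ∈ Finset.Ico 2 k, (F (i+1) - F i) := Finset.sum_le_sum hterm
      _ = F k - F 2 := tele F k hk
  have hTk : (∑ p ∈ (Finset.range (k+1)).filter Nat.Prime, Real.log p / p) / Real.log k
      ≤ 1 + Real.log 4 / Real.log k := by
    rw [div_le_iff₀ hlogk]
    have := mertens1 k hk
    calc _ ≤ Real.log k + Real.log 4 := this
      _ = (1 + Real.log 4 / Real.log k) * Real.log k := by field_simp
  have hFk : F k = Real.log (Real.log k) - Real.log 4 / Real.log k := rfl
  have hF2 : F 2 = Real.log (Real.log 2) - Real.log 4 / Real.log 2 := by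
    rw [hF]; norm_num
  rw [MB]
  have := add_le_add hTk hsum
  rw [hFk, hF2] at this
  calc _ ≤ _ := this
    _ ≤ _ := by push_cast; linarith



theorem eventual_bound (ε : ℝ) (hε : 0 < ε) :
    ∃ k₀ : ℕ, ∀ k : ℕ, k₀ ≤ k → 3 ≤ k ∧ 0 < Real.log (Real.log k) ∧
      (Real.log (Real.log k))^3 ≤ (Real.log k)^ε := by
  have ho := isLittleO_log_rpow_atTop (show 0 < ε/3 by positivity)
  have h1 : ∀ᶠ y:ℝ in atTop, (Real.log y)^3 ≤ y^ε := by
    filter_upwards [ho.def one_pos, eventually_ge_atTop (1:ℝ)] with y hy hy1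
    have hy0 : (0:ℝ) < y := lt_of_lt_of_le one_pos hy1
    have hlog : (0:ℝ) ≤ Real.log y := Real.log_nonneg hy1
    rw [one_mul, Real.norm_eq_abs, Real.norm_eq_abs, abs_of_nonneg hlog,
      abs_of_nonneg (Real.rpow_nonneg hy0.le _)] at hy
    calc (Real.log y)^3 ≤ (y ^ (ε/3))^3 := by
          exact pow_le_pow_left₀ hlog hy 3
      _ = y ^ ε := by
          rw [← Real.rpow_natCast (y ^ (ε/3)) 3, ← Real.rpow_mul hy0.le]
          norm_num
  have h2 : ∀ᶠ x:ℝ in atTop, (Real.log (Real.log x))^3 ≤ (Real.log x)^ε :=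
    Real.tendsto_log_atTop.eventually h1
  have h3 : ∀ᶠ x:ℝ in atTop, 0 < Real.log (Real.log x) :=
    (Real.tendsto_log_atTop.comp Real.tendsto_log_atTop).eventually_gt_atTop 0
  have h4 : ∀ᶠ k:ℕ in atTop, (Real.log (Real.log (k:ℝ)))^3 ≤ (Real.log (k:ℝ))^ε ∧
      0 < Real.log (Real.log (k:ℝ)) :=
    tendsto_natCast_atTop_atTop.eventually (h2.and h3)
  have h5 := h4.and (eventually_ge_atTop 3)
  rw [eventually_atTop] at h5
  obtain ⟨k₀, hk₀⟩ := h5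
  exact ⟨k₀, fun k hk => ⟨(hk₀ k hk).2, (hk₀ k hk).1.2, (hk₀ k hk).1.1⟩⟩

end HolowinskyAux

/-- Inequality (1.2) of Holowinsky–Soundararajan: if
`exp(Σ_{p ≤ k} λ(p²)/p) ≤ A (log log k)³ L₁`, then
`M = (1/((log k)² L₁)) ∏_{p ≤ k} (1 + 2|λ(p)|/p)` satisfies
`M ≤ C (log k)^ε exp(−Σ_{p ≤ k} (|λ(p)|−1)²/p)`. -/
theorem inequality_one_two (A ε : ℝ) (hA : 0 < A) (hε : 0 < ε) (hε1 : ε < 1) :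
    ∃ C : ℝ, ∃ k₀ : ℕ, ∀ (k : ℕ) (lam lam2 : ℕ → ℝ) (L₁ : ℝ),
      k₀ ≤ k →
      (∀ p : ℕ, p.Prime → (lam p) ^ 2 = lam2 p + 1) →
      (∀ p : ℕ, p.Prime → |lam p| ≤ 2) →
      0 < L₁ →
      Real.exp (∑ p ∈ (Finset.range (k + 1)).filter Nat.Prime, lam2 p / p)
        ≤ A * (Real.log (Real.log k)) ^ 3 * L₁ →
      (1 / ((Real.log k) ^ 2 * L₁)) *
          ∏ p ∈ (Finset.range (k + 1)).filter Nat.Prime, (1 + 2 * |lam p| / p)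
        ≤ C * (Real.log k) ^ ε *
            Real.exp (-∑ p ∈ (Finset.range (k + 1)).filter Nat.Prime,
              (|lam p| - 1) ^ 2 / p) := by
  obtain ⟨k₀, hk₀⟩ := eventual_bound ε hε
  refine ⟨A * Real.exp (2 * MB), k₀, ?_⟩
  intro k lam lam2 L₁ hk hhecke hdeligne hL₁ hhyp
  obtain ⟨hk3, hll, hllε⟩ := hk₀ k hk
  set P := (Finset.range (k + 1)).filter Nat.Prime with hP
  have hkR : (1:ℝ) < (k:ℝ) := by exact_mod_cast (by omega : 1 < k)
  have hlogk : (0:ℝ) < Real.log k := Real.log_pos hkR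
  have hprime : ∀ p ∈ P, Nat.Prime p := fun p hp => (Finset.mem_filter.mp hp).2
  have hppos : ∀ p ∈ P, (0:ℝ) < p := fun p hp => by exact_mod_cast (hprime p hp).pos
  -- Step 1: product ≤ exp of sum
  have step1 : ∏ p ∈ P, (1 + 2 * |lam p| / p) ≤ Real.exp (∑ p ∈ P, 2 * |lam p| / p) := by
    rw [Real.exp_sum]
    apply Finset.prod_le_prod
    · intro p hp
      have := hppos p hp
      positivity
    · intro p hp
      have := Real.add_one_le_exp (2 * |lam p| / p)
      linarith
  -- Step 2: pointwise identity
  have step2 : ∑ p ∈ P, 2 * |lam p| / p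
      = ∑ p ∈ P, lam2 p / p + 2 * ∑ p ∈ P, (1:ℝ)/p - ∑ p ∈ P, (|lam p| - 1)^2 / p := by
    rw [Finset.mul_sum, ← Finset.sum_add_distrib, ← Finset.sum_sub_distrib]
    apply Finset.sum_congr rfl
    intro p hp
    have hpp := hprime p hp
    have hid : 2 * |lam p| = lam2 p + 2 - (|lam p| - 1)^2 := by
      have h1 := hhecke p hpp
      have h2 : |lam p|^2 = (lam p)^2 := sq_abs _
      nlinarith
    have hp0 : (p:ℝ) ≠ 0 := ne_of_gt (hppos p hp)
    field_simp
    linarith [hid]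
  -- Step 3: bound exp(2 Σ 1/p)
  have hm2 := mertens2 k (by omega)
  have step3 : Real.exp (2 * ∑ p ∈ P, (1:ℝ)/p)
      ≤ Real.exp (2 * MB) * (Real.log k)^2 := by
    calc Real.exp (2 * ∑ p ∈ P, (1:ℝ)/p)
        ≤ Real.exp (2 * (Real.log (Real.log k) + MB)) := by
          apply Real.exp_le_exp.mpr
          have : ∑ p ∈ P, (1:ℝ)/p ≤ Real.log (Real.log k) + MB := hm2
          linarith
      _ = Real.exp (2 * MB) * (Real.log k)^2 := by
          rw [show 2 * (Real.log (Real.log k) + MB)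
              = 2 * MB + 2 * Real.log (Real.log k) by ring, Real.exp_add]
          congr 1
          rw [show 2 * Real.log (Real.log k) = Real.log (Real.log k) + Real.log (Real.log k) by
            ring, Real.exp_add, Real.exp_log hlogk]
          ring
  -- combine everything
  set E := Real.exp (-∑ p ∈ P, (|lam p| - 1)^2 / p) with hE'
  have hE : (0:ℝ) < E := Real.exp_pos _
  have hexp : Real.exp (∑ p ∈ P, 2 * |lam p| / p)
      = Real.exp (∑ p ∈ P, lam2 p / p) * Real.exp (2 * ∑ p ∈ P, (1:ℝ)/p) * E := by
    rw [hE', ← Real.exp_add, ← Real.exp_add, step2, sub_eq_add_neg]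
  have hprod : ∏ p ∈ P, (1 + 2 * |lam p| / p)
      ≤ (A * (Real.log (Real.log k))^3 * L₁) * (Real.exp (2*MB) * (Real.log k)^2) * E := by
    calc ∏ p ∈ P, (1 + 2 * |lam p| / p) ≤ _ := step1
      _ = _ := hexp
      _ ≤ _ := by
        apply mul_le_mul_of_nonneg_right _ hE.le
        apply mul_le_mul hhyp step3 (Real.exp_pos _).le
        positivity
  rw [one_div, inv_mul_le_iff₀ (by positivity)]
  have hcpos : (0:ℝ) ≤ A * Real.exp (2*MB) * L₁ * (Real.log k)^2 * E := by positivity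
  have key := mul_le_mul_of_nonneg_left hllε hcpos
  calc ∏ p ∈ P, (1 + 2 * |lam p| / p)
      ≤ (A * (Real.log (Real.log k))^3 * L₁) * (Real.exp (2*MB) * (Real.log k)^2) * E := hprod
    _ = (A * Real.exp (2*MB) * L₁ * (Real.log k)^2 * E) * (Real.log (Real.log k))^3 := by ring
    _ ≤ (A * Real.exp (2*MB) * L₁ * (Real.log k)^2 * E) * (Real.log k)^ε := key
    _ = Real.log k ^ 2 * L₁ * (A * Real.exp (2*MB) * Real.log k ^ ε * E) := by ring
end

section
/- Let c > 0 and A > 0. There is a constant C depending only on A with the following property. Let k ≥ 16 be an integer, and let (ρ_j)_{j∈J} be a countable family of complex numbers, ρ_j = β_j + iγ_j, such that 0 ≤ β_j ≤ 1 and β_j ≤ 1 − c/log(k(1+|γ_j|)) for every j, and such that for every integer n ≥ 0 the number of indices j with n ≤ |γ_j| < n+1 is at most A·log(k(2+n)). Then for every σ ∈ [1, 5/4] and every real x ≥ 2, Σ_j x^{β_j − σ} / (|ρ_j − σ| · |ρ_j − σ + 2|) ≤ C ( x^{−c/(2 log k)} (log k)² + 1 ). -/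
set_option maxHeartbeats 1000000


/-- Bound on the sum over nontrivial zeros in the proof of Lemma 2 of
Holowinsky–Soundararajan: for a countable family `ρ_j = β_j + iγ_j` with
`0 ≤ β_j ≤ 1`, `β_j ≤ 1 − c/log(k(1+|γ_j|))`, and at most `A log(k(2+n))`
indices with `n ≤ |γ_j| < n+1` for each `n`, one has (uniformly over finite
subfamilies, i.e. the sum converges and is so bounded)
`Σ_j x^{β_j−σ}/(|ρ_j−σ||ρ_j−σ+2|) ≤ C (x^{−c/(2 log k)} (log k)² + 1)`. -/
theorem zero_sum_bound (c A : ℝ) (hc : 0 < c) (hA : 0 < A) :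
    ∃ C : ℝ, ∀ (k : ℕ) (J : Type) (_ : Countable J) (ρ : J → ℂ),
      16 ≤ k →
      (∀ j : J, 0 ≤ (ρ j).re ∧ (ρ j).re ≤ 1 ∧
        (ρ j).re ≤ 1 - c / Real.log (k * (1 + |(ρ j).im|))) →
      (∀ n : ℕ,
        {j : J | (n : ℝ) ≤ |(ρ j).im| ∧ |(ρ j).im| < n + 1}.Finite ∧
        ({j : J | (n : ℝ) ≤ |(ρ j).im| ∧ |(ρ j).im| < n + 1}.ncard : ℝ)
          ≤ A * Real.log (k * (2 + n))) →
      ∀ (σ : ℝ), 1 ≤ σ → σ ≤ 5 / 4 → ∀ (x : ℝ), 2 ≤ x →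
        ∀ S : Finset J,
          ∑ j ∈ S, x ^ ((ρ j).re - σ) /
              (‖ρ j - σ‖ * ‖ρ j - σ + 2‖)
            ≤ C * (x ^ (-c / (2 * Real.log k)) * (Real.log k) ^ 2 + 1) := by
  classical
  have hsumm : Summable (fun n : ℕ => (n : ℝ) ^ (-(3/2) : ℝ)) := by
    rw [Real.summable_nat_rpow]; norm_num
  set B := ∑' n : ℕ, (n : ℝ) ^ (-(3/2) : ℝ) with hBdef
  have hB0 : 0 ≤ B := tsum_nonneg fun n => Real.rpow_nonneg (Nat.cast_nonneg n) _
  refine ⟨16 * A / (3 * c) + 10 * A * B + 1, ?_⟩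
  intro k J _inst ρ hk hβ hcount σ hσ1 hσ2 x hx S
  have hk16 : (16 : ℝ) ≤ (k : ℝ) := by exact_mod_cast hk
  have hkpos : (0 : ℝ) < (k : ℝ) := by linarith
  set L := Real.log (k : ℝ) with hLdef
  have hL1 : 1 ≤ L := by
    rw [hLdef, Real.le_log_iff_exp_le hkpos]
    have h := Real.exp_one_lt_d9
    norm_num at h ⊢
    linarith
  have hLpos : (0 : ℝ) < L := by linarith
  have hx1 : (1 : ℝ) ≤ x := by linarith
  have hx0 : (0 : ℝ) ≤ x := by linarith
  set T := x ^ (-c / (2 * L)) with hTdef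
  have hT0 : 0 ≤ T := Real.rpow_nonneg hx0 _
  set F : ℕ → ℝ := fun m => (m : ℝ) ^ (-(3/2) : ℝ) with hFdef
  have hF0 : ∀ m, 0 ≤ F m := fun m => Real.rpow_nonneg (Nat.cast_nonneg m) _
  set G0 : ℝ := 16 * A / (3 * c) * (L ^ 2 * T) with hG0def
  have hG0nn : 0 ≤ G0 := by
    rw [hG0def]
    apply mul_nonneg
    · apply div_nonneg (by linarith) (by linarith)
    · exact mul_nonneg (sq_nonneg L) hT0
  set Coef : ℝ := 2 * A * L * T + 8 * A with hCoefdef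
  have hCoef0 : 0 ≤ Coef := by
    rw [hCoefdef]
    have h1 : 0 ≤ 2 * A * L * T :=
      mul_nonneg (mul_nonneg (by linarith) hLpos.le) hT0
    linarith
  -- lower bound on |ρ j - σ + 2|
  have hw : ∀ j : J, (3 : ℝ) / 4 ≤ ‖ρ j - ↑σ + 2‖ := by
    intro j
    have h1 : (ρ j - ↑σ + 2).re = (ρ j).re - σ + 2 := by simp
    have h2 := Complex.re_le_norm (ρ j - ↑σ + 2)
    rw [h1] at h2
    have h3 := (hβ j).1
    linarith
  -- key bounds when 1 + |γ| ≤ k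
  have hkey : ∀ j : J, 1 + |(ρ j).im| ≤ (k : ℝ) →
      c / (2 * L) ≤ σ - (ρ j).re ∧ x ^ ((ρ j).re - σ) ≤ T := by
    intro j hjk
    have ha0 : (0 : ℝ) ≤ |(ρ j).im| := abs_nonneg _
    have hargpos : (0 : ℝ) < (k : ℝ) * (1 + |(ρ j).im|) := by nlinarith
    have hLgpos : 0 < Real.log ((k : ℝ) * (1 + |(ρ j).im|)) := by
      apply Real.log_pos; nlinarith
    have hLg2L : Real.log ((k : ℝ) * (1 + |(ρ j).im|)) ≤ 2 * L := by
      have h1 : (k : ℝ) * (1 + |(ρ j).im|) ≤ (k : ℝ) * (k : ℝ) := by nlinarith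
      have h2 := Real.log_le_log hargpos h1
      rw [Real.log_mul (ne_of_gt hkpos) (ne_of_gt hkpos)] at h2
      rw [← hLdef] at h2
      linarith
    have h3 : c / (2 * L) ≤ c / Real.log ((k : ℝ) * (1 + |(ρ j).im|)) :=
      div_le_div_of_nonneg_left hc.le hLgpos hLg2L
    have h4 := (hβ j).2.2
    constructor
    · linarith
    · apply Real.rpow_le_rpow_of_exponent_le hx1
      have h5 : -c / (2 * L) = -(c / (2 * L)) := by ring
      rw [h5]
      linarith
  -- imaginary part lower bounds
  have him_z : ∀ j : J, |(ρ j).im| ≤ ‖ρ j - ↑σ‖ := by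
    intro j
    have := Complex.abs_im_le_norm (ρ j - ↑σ)
    simpa using this
  have him_w : ∀ j : J, |(ρ j).im| ≤ ‖ρ j - ↑σ + 2‖ := by
    intro j
    have := Complex.abs_im_le_norm (ρ j - ↑σ + 2)
    simpa using this
  set N := (S.sup fun j => ⌊|(ρ j).im|⌋₊) + 1 with hNdef
  have hmap : ∀ j ∈ S, ⌊|(ρ j).im|⌋₊ ∈ Finset.range N := by
    intro j hj
    rw [Finset.mem_range, hNdef]
    exact Nat.lt_succ_of_le (Finset.le_sup (f := fun j => ⌊|(ρ j).im|⌋₊) hj)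
  rw [← Finset.sum_fiberwise_of_maps_to hmap]
  have hfiber : ∀ n ∈ Finset.range N,
      (∑ j ∈ S.filter (fun j => ⌊|(ρ j).im|⌋₊ = n),
        x ^ ((ρ j).re - σ) /
          (‖ρ j - ↑σ‖ * ‖ρ j - ↑σ + 2‖))
      ≤ (if n = 0 then G0 else 0) + Coef * F n := by
    intro n _
    set Sn := S.filter (fun j => ⌊|(ρ j).im|⌋₊ = n) with hSndef
    have hmem : ∀ j ∈ Sn, (n : ℝ) ≤ |(ρ j).im| ∧ |(ρ j).im| < (n : ℝ) + 1 := by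
      intro j hj
      rw [hSndef, Finset.mem_filter] at hj
      constructor
      · rw [← hj.2]; exact Nat.floor_le (abs_nonneg _)
      · have h := Nat.lt_floor_add_one |(ρ j).im|
        rw [hj.2] at h; exact h
    have hcard : (Sn.card : ℝ) ≤ A * Real.log ((k : ℝ) * (2 + n)) := by
      have hsub : ↑Sn ⊆ {j : J | (n : ℝ) ≤ |(ρ j).im| ∧ |(ρ j).im| < n + 1} := by
        intro j hj
        exact hmem j (Finset.mem_coe.mp hj)
      have h1 := Set.ncard_le_ncard hsub (hcount n).1
      rw [Set.ncard_coe_finset] at h1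
      calc (Sn.card : ℝ)
          ≤ ({j : J | (n : ℝ) ≤ |(ρ j).im| ∧ |(ρ j).im| < n + 1}.ncard : ℝ) := by
            exact_mod_cast h1
        _ ≤ A * Real.log ((k : ℝ) * (2 + n)) := (hcount n).2
    by_cases hn0 : n = 0
    · -- n = 0 : zeros with |γ| < 1
      subst hn0
      have hterm : ∀ j ∈ Sn, x ^ ((ρ j).re - σ) /
          (‖ρ j - ↑σ‖ * ‖ρ j - ↑σ + 2‖)
          ≤ T / (c / (2 * L) * (3 / 4)) := by
        intro j hj
        have hγ1 : |(ρ j).im| < 1 := by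
          have h := (hmem j hj).2
          norm_num at h
          exact h
        have h1k : 1 + |(ρ j).im| ≤ (k : ℝ) := by linarith
        have hzre := (hkey j h1k).1
        have habs : c / (2 * L) ≤ ‖ρ j - ↑σ‖ := by
          have h4 := Complex.abs_re_le_norm (ρ j - ↑σ)
          have h5 : (ρ j - ↑σ).re = (ρ j).re - σ := by simp
          rw [h5] at h4
          have h6 : σ - (ρ j).re ≤ |(ρ j).re - σ| := by
            rw [abs_sub_comm]; exact le_abs_self _
          linarith
        exact div_le_div₀ hT0 (hkey j h1k).2
          (by apply mul_pos (div_pos hc (by linarith)) (by norm_num))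
          (mul_le_mul habs (hw j) (by norm_num) (norm_nonneg _))
      have hsum1 := Finset.sum_le_card_nsmul Sn _ _ hterm
      rw [nsmul_eq_mul] at hsum1
      have hbpos : (0 : ℝ) < c / (2 * L) * (3 / 4) :=
        mul_pos (div_pos hc (by linarith)) (by norm_num)
      have hbnn : 0 ≤ T / (c / (2 * L) * (3 / 4)) := div_nonneg hT0 hbpos.le
      have hlog : Real.log ((k : ℝ) * (2 + (0 : ℕ))) ≤ 2 * L := by
        have h1 : ((k : ℝ) * (2 + (0 : ℕ))) = (k : ℝ) * 2 := by norm_num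
        rw [h1, Real.log_mul (ne_of_gt hkpos) (by norm_num), ← hLdef]
        have h2 := Real.log_two_lt_d9
        linarith
      have hlognn : (0 : ℝ) ≤ A * Real.log ((k : ℝ) * (2 + (0 : ℕ))) := by
        exact le_trans (Nat.cast_nonneg _) hcard
      have hF0eq : F 0 = 0 := by
        rw [hFdef]
        norm_num
      rw [if_pos rfl, hF0eq, mul_zero, add_zero]
      calc (∑ j ∈ Sn, x ^ ((ρ j).re - σ) /
            (‖ρ j - ↑σ‖ * ‖ρ j - ↑σ + 2‖))
          ≤ (Sn.card : ℝ) * (T / (c / (2 * L) * (3 / 4))) := hsum1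
        _ ≤ (A * Real.log ((k : ℝ) * (2 + (0 : ℕ)))) * (T / (c / (2 * L) * (3 / 4))) :=
            mul_le_mul_of_nonneg_right hcard hbnn
        _ ≤ (A * (2 * L)) * (T / (c / (2 * L) * (3 / 4))) := by
            apply mul_le_mul_of_nonneg_right _ hbnn
            exact mul_le_mul_of_nonneg_left hlog hA.le
        _ = G0 := by
            rw [hG0def]
            field_simp
            ring
    · -- n ≥ 1
      have hn1 : 1 ≤ n := Nat.one_le_iff_ne_zero.mpr hn0
      have hn1R : (1 : ℝ) ≤ (n : ℝ) := by exact_mod_cast hn1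
      have hnpos : (0 : ℝ) < (n : ℝ) := by linarith
      have hzn : ∀ j ∈ Sn, (n : ℝ) ≤ ‖ρ j - ↑σ‖ :=
        fun j hj => le_trans (hmem j hj).1 (him_z j)
      have hwn : ∀ j ∈ Sn, (n : ℝ) ≤ ‖ρ j - ↑σ + 2‖ :=
        fun j hj => le_trans (hmem j hj).1 (him_w j)
      have hnn : (0 : ℝ) < (n : ℝ) * (n : ℝ) := mul_pos hnpos hnpos
      have hsq : (n : ℝ) * (n : ℝ) = (n : ℝ) ^ (2 : ℝ) := by
        rw [show ((2 : ℝ)) = ((2 : ℕ) : ℝ) by norm_num, Real.rpow_natCast]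
        ring
      have hFn : F n = Real.sqrt n / ((n : ℝ) * (n : ℝ)) := by
        have h1 : Real.sqrt (n : ℝ) / ((n : ℝ) * (n : ℝ))
            = (n : ℝ) ^ ((1 : ℝ) / 2 - 2) := by
          rw [Real.rpow_sub hnpos, Real.sqrt_eq_rpow, hsq]
        rw [hFdef, h1]
        norm_num
      have hs1 : 1 ≤ Real.sqrt (n : ℝ) := by
        have h := Real.sqrt_le_sqrt hn1R
        rwa [Real.sqrt_one] at h
      rw [if_neg hn0, zero_add]
      by_cases hnk : n + 2 ≤ k
      · -- 1 ≤ n ≤ k - 2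
        have hterm : ∀ j ∈ Sn, x ^ ((ρ j).re - σ) /
            (‖ρ j - ↑σ‖ * ‖ρ j - ↑σ + 2‖)
            ≤ T / ((n : ℝ) * (n : ℝ)) := by
          intro j hj
          have h1k : 1 + |(ρ j).im| ≤ (k : ℝ) := by
            have h2 := (hmem j hj).2
            have h3 : ((n : ℝ) + 2) ≤ (k : ℝ) := by exact_mod_cast hnk
            linarith
          exact div_le_div₀ hT0 (hkey j h1k).2 hnn
            (mul_le_mul (hzn j hj) (hwn j hj) hnpos.le (norm_nonneg _))
        have hsum1 := Finset.sum_le_card_nsmul Sn _ _ hterm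
        rw [nsmul_eq_mul] at hsum1
        have hbnn : 0 ≤ T / ((n : ℝ) * (n : ℝ)) := div_nonneg hT0 hnn.le
        have hlog : Real.log ((k : ℝ) * (2 + n)) ≤ 2 * L := by
          have h3 : (2 : ℝ) + (n : ℝ) ≤ (k : ℝ) := by
            have : ((n : ℕ) + 2 : ℕ) ≤ k := hnk
            have h4 : ((n : ℝ) + 2) ≤ (k : ℝ) := by exact_mod_cast this
            linarith
          rw [Real.log_mul (ne_of_gt hkpos) (by positivity), ← hLdef]
          have h4 : Real.log ((2 : ℝ) + n) ≤ L := by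
            rw [hLdef]
            exact Real.log_le_log (by positivity) h3
          linarith
        have h32 : T / ((n : ℝ) * (n : ℝ)) ≤ T * F n := by
          calc T / ((n : ℝ) * (n : ℝ)) = T * (1 / ((n : ℝ) * (n : ℝ))) := by ring
            _ ≤ T * (Real.sqrt n / ((n : ℝ) * (n : ℝ))) := by
                apply mul_le_mul_of_nonneg_left _ hT0
                exact (div_le_div_iff_of_pos_right hnn).mpr hs1
            _ = T * F n := by rw [hFn]
        calc (∑ j ∈ Sn, x ^ ((ρ j).re - σ) /
              (‖ρ j - ↑σ‖ * ‖ρ j - ↑σ + 2‖))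
            ≤ (Sn.card : ℝ) * (T / ((n : ℝ) * (n : ℝ))) := hsum1
          _ ≤ (A * Real.log ((k : ℝ) * (2 + n))) * (T / ((n : ℝ) * (n : ℝ))) :=
              mul_le_mul_of_nonneg_right hcard hbnn
          _ ≤ (A * (2 * L)) * (T * F n) := by
              apply mul_le_mul (mul_le_mul_of_nonneg_left hlog hA.le) h32 hbnn
              exact mul_nonneg hA.le (by linarith)
          _ = 2 * A * L * T * F n := by ring
          _ ≤ Coef * F n := by
              rw [hCoefdef, show (2 * A * L * T + 8 * A) * F n
                = 2 * A * L * T * F n + 8 * A * F n from by ring]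
              have h8 : 0 ≤ 8 * A * F n :=
                mul_nonneg (by linarith) (hF0 n)
              linarith
      · -- n ≥ k - 1
        have hkn : (k : ℝ) ≤ 2 + (n : ℝ) := by
          have h1 : k ≤ n + 2 := by omega
          have h2 : (k : ℝ) ≤ (n : ℝ) + 2 := by exact_mod_cast h1
          linarith
        have hterm : ∀ j ∈ Sn, x ^ ((ρ j).re - σ) /
            (‖ρ j - ↑σ‖ * ‖ρ j - ↑σ + 2‖)
            ≤ 1 / ((n : ℝ) * (n : ℝ)) := by
          intro j hj
          have hnum1 : x ^ ((ρ j).re - σ) ≤ 1 :=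
            Real.rpow_le_one_of_one_le_of_nonpos hx1 (by linarith [(hβ j).2.1])
          exact div_le_div₀ zero_le_one hnum1 hnn
            (mul_le_mul (hzn j hj) (hwn j hj) hnpos.le (norm_nonneg _))
        have hsum1 := Finset.sum_le_card_nsmul Sn _ _ hterm
        rw [nsmul_eq_mul] at hsum1
        have hbnn : (0 : ℝ) ≤ 1 / ((n : ℝ) * (n : ℝ)) := by positivity
        have hlog : Real.log ((k : ℝ) * (2 + n)) ≤ 8 * Real.sqrt n := by
          have h2n : (0 : ℝ) < 2 + (n : ℝ) := by linarith
          rw [Real.log_mul (ne_of_gt hkpos) (ne_of_gt h2n)]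
          have h1 : Real.log (k : ℝ) ≤ Real.log (2 + (n : ℝ)) :=
            Real.log_le_log hkpos hkn
          have h2 : Real.log (2 + (n : ℝ)) ≤ 2 * Real.sqrt (2 + (n : ℝ)) := by
            have h3 := Real.log_le_sub_one_of_pos (Real.sqrt_pos.mpr h2n)
            have h4 : Real.log (Real.sqrt (2 + (n : ℝ))) = Real.log (2 + (n : ℝ)) / 2 :=
              Real.log_sqrt h2n.le
            linarith [Real.sqrt_nonneg (2 + (n : ℝ))]
          have h5 : Real.sqrt (2 + (n : ℝ)) ≤ 2 * Real.sqrt n := by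
            have h6 : (2 : ℝ) + (n : ℝ) ≤ 4 * (n : ℝ) := by linarith
            have h7 : Real.sqrt (4 : ℝ) = 2 := by
              rw [show (4 : ℝ) = 2 ^ 2 by norm_num]
              exact Real.sqrt_sq (by norm_num)
            calc Real.sqrt (2 + (n : ℝ)) ≤ Real.sqrt (4 * (n : ℝ)) := Real.sqrt_le_sqrt h6
              _ = Real.sqrt 4 * Real.sqrt n := Real.sqrt_mul (by norm_num) _
              _ = 2 * Real.sqrt n := by rw [h7]
          linarith
        have hslognn : (0 : ℝ) ≤ A * Real.log ((k : ℝ) * (2 + n)) :=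
          le_trans (Nat.cast_nonneg _) hcard
        calc (∑ j ∈ Sn, x ^ ((ρ j).re - σ) /
              (‖ρ j - ↑σ‖ * ‖ρ j - ↑σ + 2‖))
            ≤ (Sn.card : ℝ) * (1 / ((n : ℝ) * (n : ℝ))) := hsum1
          _ ≤ (A * Real.log ((k : ℝ) * (2 + n))) * (1 / ((n : ℝ) * (n : ℝ))) :=
              mul_le_mul_of_nonneg_right hcard hbnn
          _ ≤ (A * (8 * Real.sqrt n)) * (1 / ((n : ℝ) * (n : ℝ))) :=
              mul_le_mul_of_nonneg_right (mul_le_mul_of_nonneg_left hlog hA.le) hbnn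
          _ = 8 * A * (Real.sqrt n / ((n : ℝ) * (n : ℝ))) := by ring
          _ = 8 * A * F n := by rw [hFn]
          _ ≤ Coef * F n := by
              rw [hCoefdef, show (2 * A * L * T + 8 * A) * F n
                = 2 * A * L * T * F n + 8 * A * F n from by ring]
              have h8 : 0 ≤ 2 * A * L * T * F n :=
                mul_nonneg (mul_nonneg (mul_nonneg (by linarith) hLpos.le) hT0) (hF0 n)
              linarith
  calc (∑ n ∈ Finset.range N, ∑ j ∈ S.filter (fun j => ⌊|(ρ j).im|⌋₊ = n),
        x ^ ((ρ j).re - σ) /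
          (‖ρ j - ↑σ‖ * ‖ρ j - ↑σ + 2‖))
      ≤ ∑ n ∈ Finset.range N, ((if n = 0 then G0 else 0) + Coef * F n) :=
        Finset.sum_le_sum hfiber
    _ = (∑ n ∈ Finset.range N, if n = 0 then G0 else 0)
          + Coef * ∑ n ∈ Finset.range N, F n := by
        rw [Finset.sum_add_distrib, Finset.mul_sum]
    _ ≤ G0 + Coef * B := by
        have h1 : (∑ n ∈ Finset.range N, if n = 0 then G0 else 0) ≤ G0 := by
          rw [show (fun n : ℕ => if n = 0 then G0 else 0)
              = fun n : ℕ => if n = 0 then (fun _ : ℕ => G0) n else 0 from rfl]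
          rw [Finset.sum_ite_eq' (Finset.range N) 0 (fun _ => G0)]
          split_ifs
          · exact le_refl _
          · exact hG0nn
        have h2 : ∑ n ∈ Finset.range N, F n ≤ B :=
          Summable.sum_le_tsum _ (fun i _ => hF0 i) hsumm
        have h3 : Coef * ∑ n ∈ Finset.range N, F n ≤ Coef * B :=
          mul_le_mul_of_nonneg_left h2 hCoef0
        linarith
    _ ≤ (16 * A / (3 * c) + 10 * A * B + 1) * (T * L ^ 2 + 1) := by
        rw [hG0def, hCoefdef]
        have hL2T : 0 ≤ L ^ 2 * T := mul_nonneg (sq_nonneg L) hT0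
        have hLT : L * T ≤ L ^ 2 * T := by nlinarith
        have hAB : 0 ≤ A * B := mul_nonneg hA.le hB0
        have h1 : 2 * A * B * (L * T) ≤ 2 * A * B * (L ^ 2 * T) := by
          apply mul_le_mul_of_nonneg_left hLT (by linarith)
        have h2 : 0 ≤ 16 * A / (3 * c) := div_nonneg (by linarith) (by linarith)
        nlinarith [mul_nonneg hAB hL2T]
end

section
/- Let 0 < ε ≤ 1/100 and let C₁, C₂, C₃ > 0. There are constants C and k₀ (depending only on ε, C₁, C₂, C₃) with the following property. For every integer k ≥ k₀ and all real numbers I ≥ 0, M ≥ 0, L₁ > 0 satisfying (a) I ≤ C₁ (log k)^{ε} M^{1/2}, (b) I ≤ C₂ (log k)^{−1/2+ε} / L₁, and (c) M ≤ C₃ (log k)^{1/6} (log log k)^{9/2} L₁^{1/2}, one has I ≤ C (log k)^{−1/30 + 2ε}. -/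
/-- Deduction of Theorem 1(i) of Holowinsky–Soundararajan from
Holowinsky's Theorem 2(i) (hypothesis (a)), Soundararajan's Theorem 3(i)
(hypothesis (b)) and Lemma 3 (hypothesis (c)):
`I ≤ C (log k)^{−1/30+2ε}`. -/
theorem deduce_theorem_one_i (ε C₁ C₂ C₃ : ℝ) (hε : 0 < ε) (hε' : ε ≤ 1 / 100)
    (hC₁ : 0 < C₁) (hC₂ : 0 < C₂) (hC₃ : 0 < C₃) :
    ∃ C : ℝ, ∃ k₀ : ℕ, ∀ k : ℕ, k₀ ≤ k → ∀ I M L₁ : ℝ,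
      0 ≤ I → 0 ≤ M → 0 < L₁ →
      I ≤ C₁ * (Real.log k) ^ ε * M ^ ((1 : ℝ) / 2) →
      I ≤ C₂ * (Real.log k) ^ (-(1 : ℝ) / 2 + ε) / L₁ →
      M ≤ C₃ * (Real.log k) ^ ((1 : ℝ) / 6) *
            (Real.log (Real.log k)) ^ ((9 : ℝ) / 2) * L₁ ^ ((1 : ℝ) / 2) →
      I ≤ C * (Real.log k) ^ (-(1 : ℝ) / 30 + 2 * ε) := by
  set δ : ℝ := 4 * ε / 9 with hδdef
  have hδ : 0 < δ := by positivity
  refine ⟨max C₂ (C₁ * C₃ ^ ((1:ℝ)/2) * δ ^ (-((9:ℝ)/4))), 3, ?_⟩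
  intro k hk I M L₁ hI hM hL₁ ha hb hc
  have h3 : (3:ℝ) ≤ (k:ℝ) := by exact_mod_cast hk
  have hL : (1:ℝ) ≤ Real.log k := by
    have he := Real.exp_one_lt_d9
    calc (1:ℝ) = Real.log (Real.exp 1) := (Real.log_exp 1).symm
    _ ≤ Real.log k := Real.log_le_log (Real.exp_pos 1) (by linarith)
  set L : ℝ := Real.log k with hLdef
  have hL0 : (0:ℝ) < L := lt_of_lt_of_le one_pos hL
  have hexp : ∀ a b : ℝ, a ≤ b → L ^ a ≤ L ^ b :=
    fun a b hab => Real.rpow_le_rpow_of_exponent_le hL hab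
  by_cases hcase : L ^ (-(7:ℝ)/15) ≤ L₁
  · -- L₁ large: use (b)
    have hLpow : (0:ℝ) < L ^ (-(7:ℝ)/15) := Real.rpow_pos_of_pos hL0 _
    have hinv : 1 / L₁ ≤ L ^ ((7:ℝ)/15) := by
      rw [div_le_iff₀ hL₁]
      calc (1:ℝ) = L ^ ((7:ℝ)/15) * L ^ (-(7:ℝ)/15) := by
            rw [← Real.rpow_add hL0]; norm_num
      _ ≤ L ^ ((7:ℝ)/15) * L₁ :=
            mul_le_mul_of_nonneg_left hcase (Real.rpow_pos_of_pos hL0 _).le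
    have h1 : I ≤ C₂ * L ^ (-(1:ℝ)/2 + ε) * (1 / L₁) := by
      rw [mul_one_div]; exact hb
    have h2 : C₂ * L ^ (-(1:ℝ)/2 + ε) * (1 / L₁) ≤ C₂ * L ^ (-(1:ℝ)/2 + ε) * L ^ ((7:ℝ)/15) := by
      have : (0:ℝ) ≤ C₂ * L ^ (-(1:ℝ)/2 + ε) := by positivity
      exact mul_le_mul_of_nonneg_left hinv this
    have h3' : C₂ * L ^ (-(1:ℝ)/2 + ε) * L ^ ((7:ℝ)/15) = C₂ * L ^ (-(1:ℝ)/30 + ε) := by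
      rw [mul_assoc, ← Real.rpow_add hL0]; ring_nf
    have h4 : C₂ * L ^ (-(1:ℝ)/30 + ε) ≤ C₂ * L ^ (-(1:ℝ)/30 + 2*ε) := by
      exact mul_le_mul_of_nonneg_left (hexp _ _ (by linarith)) hC₂.le
    calc I ≤ C₂ * L ^ (-(1:ℝ)/30 + 2*ε) := by linarith
    _ ≤ max C₂ (C₁ * C₃ ^ ((1:ℝ)/2) * δ ^ (-((9:ℝ)/4))) * L ^ (-(1:ℝ)/30 + 2*ε) := by
        exact mul_le_mul_of_nonneg_right (le_max_left _ _) (Real.rpow_pos_of_pos hL0 _).le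
  · -- L₁ small: use (a) and (c)
    push_neg at hcase
    have hlogL : (0:ℝ) ≤ Real.log L := Real.log_nonneg hL
    have hLog : Real.log L ≤ L ^ δ / δ := Real.log_le_rpow_div hL0.le hδ
    have hlog92 : (Real.log L) ^ ((9:ℝ)/2) ≤ δ ^ (-((9:ℝ)/2)) * L ^ (2*ε) := by
      have h1 : (Real.log L) ^ ((9:ℝ)/2) ≤ (L ^ δ / δ) ^ ((9:ℝ)/2) :=
        Real.rpow_le_rpow hlogL hLog (by norm_num)
      have h2 : (L ^ δ / δ) ^ ((9:ℝ)/2) = δ ^ (-((9:ℝ)/2)) * L ^ (2*ε) := by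
        rw [Real.div_rpow (Real.rpow_pos_of_pos hL0 δ).le hδ.le,
          ← Real.rpow_mul hL0.le, Real.rpow_neg hδ.le ((9:ℝ)/2), div_eq_mul_inv,
          show δ * ((9:ℝ)/2) = 2*ε by rw [hδdef]; ring, mul_comm]
      linarith [h2 ▸ h1]
    have hL₁half : L₁ ^ ((1:ℝ)/2) ≤ L ^ (-(7:ℝ)/30) := by
      have := Real.rpow_le_rpow hL₁.le hcase.le (by norm_num : (0:ℝ) ≤ 1/2)
      rwa [← Real.rpow_mul hL0.le, show (-(7:ℝ)/15) * (1/2) = -(7:ℝ)/30 by norm_num] at this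
    have hMb : M ≤ C₃ * δ ^ (-((9:ℝ)/2)) * L ^ (-(1:ℝ)/15 + 2*ε) := by
      have hb1 : C₃ * L ^ ((1:ℝ)/6) * (Real.log L) ^ ((9:ℝ)/2) * L₁ ^ ((1:ℝ)/2)
          ≤ C₃ * L ^ ((1:ℝ)/6) * (δ ^ (-((9:ℝ)/2)) * L ^ (2*ε)) * (L ^ (-(7:ℝ)/30)) := by
        apply mul_le_mul
        · exact mul_le_mul_of_nonneg_left hlog92 (by positivity)
        · exact hL₁half
        · positivity
        · positivity
      have heq : C₃ * L ^ ((1:ℝ)/6) * (δ ^ (-((9:ℝ)/2)) * L ^ (2*ε)) * (L ^ (-(7:ℝ)/30))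
          = C₃ * δ ^ (-((9:ℝ)/2)) * L ^ (-(1:ℝ)/15 + 2*ε) := by
        rw [show (-(1:ℝ)/15 + 2*ε) = (1:ℝ)/6 + 2*ε + (-(7:ℝ)/30) by ring,
          Real.rpow_add hL0, Real.rpow_add hL0]
        ring
      calc M ≤ _ := hc
      _ ≤ _ := hb1
      _ = _ := heq
    have hMhalf : M ^ ((1:ℝ)/2) ≤ C₃ ^ ((1:ℝ)/2) * δ ^ (-((9:ℝ)/4)) * L ^ (-(1:ℝ)/30 + ε) := by
      have h1 := Real.rpow_le_rpow hM hMb (by norm_num : (0:ℝ) ≤ 1/2)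
      have h2 : (C₃ * δ ^ (-((9:ℝ)/2)) * L ^ (-(1:ℝ)/15 + 2*ε)) ^ ((1:ℝ)/2)
          = C₃ ^ ((1:ℝ)/2) * δ ^ (-((9:ℝ)/4)) * L ^ (-(1:ℝ)/30 + ε) := by
        rw [Real.mul_rpow (by positivity) (by positivity),
          Real.mul_rpow hC₃.le (by positivity),
          ← Real.rpow_mul hδ.le, ← Real.rpow_mul hL0.le,
          show (-((9:ℝ)/2)) * (1/2) = -((9:ℝ)/4) by norm_num,
          show ((-(1:ℝ)/15 + 2*ε)) * ((1:ℝ)/2) = -(1:ℝ)/30 + ε by ring]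
      linarith [h2 ▸ h1]
    have hIb : I ≤ C₁ * C₃ ^ ((1:ℝ)/2) * δ ^ (-((9:ℝ)/4)) * L ^ (-(1:ℝ)/30 + 2*ε) := by
      have h1 : C₁ * L ^ ε * M ^ ((1:ℝ)/2)
          ≤ C₁ * L ^ ε * (C₃ ^ ((1:ℝ)/2) * δ ^ (-((9:ℝ)/4)) * L ^ (-(1:ℝ)/30 + ε)) :=
        mul_le_mul_of_nonneg_left hMhalf (by positivity)
      have h2 : C₁ * L ^ ε * (C₃ ^ ((1:ℝ)/2) * δ ^ (-((9:ℝ)/4)) * L ^ (-(1:ℝ)/30 + ε))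
          = C₁ * C₃ ^ ((1:ℝ)/2) * δ ^ (-((9:ℝ)/4)) * L ^ (-(1:ℝ)/30 + 2*ε) := by
        rw [show (-(1:ℝ)/30 + 2*ε) = ε + (-(1:ℝ)/30 + ε) by ring, Real.rpow_add hL0 ε (-(1:ℝ)/30 + ε)]
        ring
      linarith [h2 ▸ (ha.trans h1)]
    calc I ≤ _ := hIb
    _ ≤ max C₂ (C₁ * C₃ ^ ((1:ℝ)/2) * δ ^ (-((9:ℝ)/4))) * L ^ (-(1:ℝ)/30 + 2*ε) :=
        mul_le_mul_of_nonneg_right (le_max_right _ _) (Real.rpow_pos_of_pos hL0 _).le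
end

section
/- Let 0 < ε ≤ 1/100 and let C₀, C₁, C₂, C₃ > 0. There are constants C and k₀ (depending only on ε, C₀, C₁, C₂, C₃) with the following property. For every integer k ≥ k₀ and all real numbers I ≥ 0, M ≥ 0, R ≥ 0, L₁ > 0 satisfying (a) I ≤ C₁ (log k)^{ε} M^{1/2} (1 + R), (b) R ≤ C₀ (log k)^{ε}, (c) I ≤ C₂ (log k)^{−1+ε} / L₁, and (d) M ≤ C₃ (log k)^{1/6} (log log k)^{9/2} L₁^{1/2}, one has I ≤ C (log k)^{−2/15 + 3ε}. -/
/-- Deduction of Theorem 1(ii) of Holowinsky–Soundararajan from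
Holowinsky's Theorem 2(ii) (hypothesis (a)), Lemma 1 (hypothesis (b)),
Soundararajan's Theorem 3(ii) (hypothesis (c)) and Lemma 3 (hypothesis (d)):
`I ≤ C (log k)^{−2/15+3ε}`. -/
theorem deduce_theorem_one_ii (ε C₀ C₁ C₂ C₃ : ℝ) (hε : 0 < ε) (hε' : ε ≤ 1 / 100)
    (hC₀ : 0 < C₀) (hC₁ : 0 < C₁) (hC₂ : 0 < C₂) (hC₃ : 0 < C₃) :
    ∃ C : ℝ, ∃ k₀ : ℕ, ∀ k : ℕ, k₀ ≤ k → ∀ I M R L₁ : ℝ,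
      0 ≤ I → 0 ≤ M → 0 ≤ R → 0 < L₁ →
      I ≤ C₁ * (Real.log k) ^ ε * M ^ ((1 : ℝ) / 2) * (1 + R) →
      R ≤ C₀ * (Real.log k) ^ ε →
      I ≤ C₂ * (Real.log k) ^ (-(1 : ℝ) + ε) / L₁ →
      M ≤ C₃ * (Real.log k) ^ ((1 : ℝ) / 6) *
            (Real.log (Real.log k)) ^ ((9 : ℝ) / 2) * L₁ ^ ((1 : ℝ) / 2) →
      I ≤ C * (Real.log k) ^ (-(2 : ℝ) / 15 + 3 * ε) := by
  -- eventual bound: (log x)^{9/4} ≤ x^ε for large x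
  have hlo := (isLittleO_log_rpow_rpow_atTop ((9 : ℝ)/4) hε).bound one_pos
  have hev1 : ∀ᶠ (x : ℝ) in Filter.atTop, Real.log x ^ ((9 : ℝ)/4) ≤ x ^ ε := by
    filter_upwards [hlo, Filter.eventually_ge_atTop (1 : ℝ)] with x hx hx1
    have h1 : Real.log x ^ ((9 : ℝ)/4) ≤ |Real.log x ^ ((9 : ℝ)/4)| := le_abs_self _
    have h2 : |x ^ ε| = x ^ ε := abs_of_nonneg (Real.rpow_nonneg (by linarith) _)
    simpa [Real.norm_eq_abs, h2, one_mul] using le_trans h1 hx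
  have hlogk : Filter.Tendsto (fun k : ℕ => Real.log k) Filter.atTop Filter.atTop :=
    Real.tendsto_log_atTop.comp tendsto_natCast_atTop_atTop
  have hev : ∀ᶠ k : ℕ in Filter.atTop,
      Real.log (Real.log k) ^ ((9 : ℝ)/4) ≤ (Real.log k) ^ ε ∧ (1 : ℝ) ≤ Real.log k := by
    filter_upwards [hlogk.eventually hev1, hlogk.eventually_ge_atTop (1 : ℝ)] with k h1 h2
    exact ⟨h1, h2⟩
  obtain ⟨k₀, hk₀⟩ := Filter.eventually_atTop.mp hev
  refine ⟨max C₂ (C₁ * C₃ ^ ((1 : ℝ)/2) * (1 + C₀)), k₀, ?_⟩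
  intro k hk I M R L₁ hI hM hR hL₁ ha hb hc hd
  obtain ⟨hLL, hL1⟩ := hk₀ k hk
  set L := Real.log k with hLdef
  have hL0 : (0 : ℝ) < L := lt_of_lt_of_le one_pos hL1
  have hlogL0 : 0 ≤ Real.log L := Real.log_nonneg hL1
  have hfin0 : 0 ≤ L ^ (-(2 : ℝ)/15 + 3 * ε) := Real.rpow_nonneg hL0.le _
  rcases le_or_gt (L ^ (-(13 : ℝ)/15)) L₁ with hcase | hcase
  · -- Case 1 : L₁ large
    have : I ≤ C₂ * L ^ (-(2 : ℝ)/15 + ε) := by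
      calc I ≤ C₂ * L ^ (-(1 : ℝ) + ε) / L₁ := hc
        _ ≤ C₂ * L ^ (-(1 : ℝ) + ε) / L ^ (-(13 : ℝ)/15) := by
            apply div_le_div_of_nonneg_left _ (Real.rpow_pos_of_pos hL0 _) hcase
            positivity
        _ = C₂ * L ^ (-(2 : ℝ)/15 + ε) := by
            rw [mul_div_assoc, ← Real.rpow_sub hL0]
            congr 2
            ring
    calc I ≤ C₂ * L ^ (-(2 : ℝ)/15 + ε) := this
      _ ≤ C₂ * L ^ (-(2 : ℝ)/15 + 3 * ε) := by
          have := Real.rpow_le_rpow_of_exponent_le hL1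
            (show -(2 : ℝ)/15 + ε ≤ -(2 : ℝ)/15 + 3 * ε by linarith)
          exact mul_le_mul_of_nonneg_left this hC₂.le
      _ ≤ max C₂ (C₁ * C₃ ^ ((1 : ℝ)/2) * (1 + C₀)) * L ^ (-(2 : ℝ)/15 + 3 * ε) :=
          mul_le_mul_of_nonneg_right (le_max_left _ _) hfin0
  · -- Case 2 : L₁ small
    have hM2 : M ≤ C₃ * Real.log L ^ ((9 : ℝ)/2) * L ^ (-(4 : ℝ)/15) := by
      calc M ≤ C₃ * L ^ ((1 : ℝ)/6) * Real.log L ^ ((9 : ℝ)/2) * L₁ ^ ((1 : ℝ)/2) := hd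
        _ ≤ C₃ * L ^ ((1 : ℝ)/6) * Real.log L ^ ((9 : ℝ)/2) *
              (L ^ (-(13 : ℝ)/15)) ^ ((1 : ℝ)/2) := by
            have h := Real.rpow_le_rpow hL₁.le hcase.le (by norm_num : (0:ℝ) ≤ 1/2)
            exact mul_le_mul_of_nonneg_left h (by positivity)
        _ = C₃ * Real.log L ^ ((9 : ℝ)/2) * L ^ (-(4 : ℝ)/15) := by
            rw [← Real.rpow_mul hL0.le, show -(13:ℝ)/15 * (1/2) = -(13:ℝ)/30 by norm_num,
              show -(4:ℝ)/15 = (1:ℝ)/6 + -(13:ℝ)/30 by norm_num, Real.rpow_add hL0]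
            ring
    have hMh : M ^ ((1 : ℝ)/2) ≤ C₃ ^ ((1 : ℝ)/2) * Real.log L ^ ((9 : ℝ)/4) *
        L ^ (-(2 : ℝ)/15) := by
      have h := Real.rpow_le_rpow hM hM2 (by norm_num : (0:ℝ) ≤ 1/2)
      calc M ^ ((1 : ℝ)/2) ≤ (C₃ * Real.log L ^ ((9 : ℝ)/2) * L ^ (-(4 : ℝ)/15)) ^ ((1 : ℝ)/2) := h
        _ = C₃ ^ ((1 : ℝ)/2) * Real.log L ^ ((9 : ℝ)/4) * L ^ (-(2 : ℝ)/15) := by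
            rw [Real.mul_rpow (by positivity) (by positivity),
              Real.mul_rpow hC₃.le (by positivity),
              ← Real.rpow_mul hlogL0, ← Real.rpow_mul hL0.le]
            norm_num
    have hR2 : 1 + R ≤ (1 + C₀) * L ^ ε := by
      have h1 : (1 : ℝ) ≤ L ^ ε := Real.one_le_rpow hL1 hε.le
      nlinarith [hb, Real.rpow_nonneg hL0.le ε]
    have hMh2 : M ^ ((1 : ℝ)/2) ≤ C₃ ^ ((1 : ℝ)/2) * L ^ ε * L ^ (-(2 : ℝ)/15) := by
      refine le_trans hMh ?_
      have := mul_le_mul_of_nonneg_left hLL (Real.rpow_nonneg hC₃.le ((1:ℝ)/2))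
      exact mul_le_mul_of_nonneg_right this (Real.rpow_nonneg hL0.le _)
    calc I ≤ C₁ * L ^ ε * M ^ ((1 : ℝ)/2) * (1 + R) := ha
      _ ≤ C₁ * L ^ ε * (C₃ ^ ((1 : ℝ)/2) * L ^ ε * L ^ (-(2 : ℝ)/15)) * ((1 + C₀) * L ^ ε) := by
          have h1 : 0 ≤ C₁ * L ^ ε := by positivity
          have h2 : 0 ≤ 1 + R := by linarith
          have h3 := mul_le_mul_of_nonneg_left hMh2 h1
          have h4 : 0 ≤ C₁ * L ^ ε * (C₃ ^ ((1 : ℝ)/2) * L ^ ε * L ^ (-(2 : ℝ)/15)) := by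
            positivity
          exact mul_le_mul h3 hR2 h2 h4
      _ = C₁ * C₃ ^ ((1 : ℝ)/2) * (1 + C₀) * L ^ (-(2 : ℝ)/15 + 3 * ε) := by
          rw [show -(2 : ℝ)/15 + 3 * ε = ε + (ε + (-(2:ℝ)/15 + ε)) by ring,
            Real.rpow_add hL0, Real.rpow_add hL0, Real.rpow_add hL0]
          ring
      _ ≤ max C₂ (C₁ * C₃ ^ ((1 : ℝ)/2) * (1 + C₀)) * L ^ (-(2 : ℝ)/15 + 3 * ε) :=
          mul_le_mul_of_nonneg_right (le_max_right _ _) hfin0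
end
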